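/- Let n ≥ 3 be an odd integer and t ∈ (0,1). With the elongated pyramid points x_j = (cos(2πj/n)/(2cos(π/(2n))), sin(2πj/n)/(2cos(π/(2n))), 0) for j = 1,…,n, x_{n+j} = t·x_j − α·e₃ for j = 1,…,n where α = √(1 − (t² + 1 + 2t·cos(π/n))/(2cos(π/(2n)))²), and apex x_{2n+1} = β·e₃ where β = √(1 − t²/(2cos(π/(2n)))²) − α, one has |x_{2n+1} − x_{n+j}| = 1 for all j = 1,…,n, and |x_{2n+1} − x_j| ≤ 1 for all j = 1,…,n. -/

import Mathlib

open Real MeasureTheory Metric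

noncomputable def pt (a b c : ℝ) : EuclideanSpace ℝ (Fin 3) :=
  (EuclideanSpace.equiv (Fin 3) ℝ).symm ![a, b, c]

set_option maxHeartbeats 2000000 in
/-- Distances from the apex of the elongated pyramid to the other vertices. -/
theorem stmt_19 (n : ℕ) (hn : 3 ≤ n) (hodd : Odd n) (t : ℝ) (ht : t ∈ Set.Ioo (0:ℝ) 1)
    (α β : ℝ)
    (hα : α = Real.sqrt (1 - (t ^ 2 + 1 + 2 * t * Real.cos (π / n)) / (2 * Real.cos (π / (2 * n))) ^ 2))
    (hβ : β = Real.sqrt (1 - t ^ 2 / (2 * Real.cos (π / (2 * n))) ^ 2) - α)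
    (x : ℕ → EuclideanSpace ℝ (Fin 3))
    (hbase : ∀ j, 1 ≤ j → j ≤ n →
      x j = pt (Real.cos (2 * π * j / n) / (2 * Real.cos (π / (2 * n))))
               (Real.sin (2 * π * j / n) / (2 * Real.cos (π / (2 * n)))) 0)
    (hmid : ∀ j, 1 ≤ j → j ≤ n → x (n + j) = t • x j - α • pt 0 0 1)
    (hapex : x (2 * n + 1) = β • pt 0 0 1) :
    (∀ j, 1 ≤ j → j ≤ n → dist (x (2 * n + 1)) (x (n + j)) = 1) ∧
    (∀ j, 1 ≤ j → j ≤ n → dist (x (2 * n + 1)) (x j) ≤ 1) := by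
  obtain ⟨ht0, ht1⟩ := ht
  have hn0 : (0:ℝ) < n := by positivity
  have hn3 : (3:ℝ) ≤ n := by exact_mod_cast hn
  -- basic trig facts
  set c : ℝ := 2 * Real.cos (π / (2 * n)) with hc
  have hπn : π / n = 2 * (π / (2 * n)) := by field_simp
  have hc2 : c ^ 2 = 2 + 2 * Real.cos (π / n) := by
    rw [hπn, Real.cos_two_mul]; ring
  have hcos_le : Real.cos (π / n) ≤ 1 := Real.cos_le_one _
  have hcos_ge : (1:ℝ)/2 ≤ Real.cos (π / n) := by
    have h1 : π / n ≤ π / 3 := by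
      apply div_le_div_of_nonneg_left Real.pi_pos.le (by norm_num) hn3
    have := Real.cos_le_cos_of_nonneg_of_le_pi (x := π / n) (y := π / 3)
      (by positivity) (by linarith [Real.pi_pos]) h1
    rw [Real.cos_pi_div_three] at this
    linarith
  have hc2_ge : (3:ℝ) ≤ c ^ 2 := by rw [hc2]; linarith
  have hc2_pos : (0:ℝ) < c ^ 2 := by linarith
  -- A, B
  set A : ℝ := 1 - t ^ 2 / c ^ 2 with hA
  set B : ℝ := 1 - (t ^ 2 + 1 + 2 * t * Real.cos (π / n)) / c ^ 2 with hB
  have hB0 : 0 ≤ B := by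
    rw [hB, sub_nonneg, div_le_one hc2_pos, hc2]
    nlinarith
  have hA0 : 0 ≤ A := by
    rw [hA, sub_nonneg, div_le_one hc2_pos]
    nlinarith
  have hAB : A - B = (1 + 2 * t * Real.cos (π / n)) / c ^ 2 := by
    rw [hA, hB]; field_simp; ring
  have hAB0 : 0 ≤ A - B := by
    rw [hAB]; positivity
  have hβα : β + α = Real.sqrt A := by rw [hβ, hα]; ring_nf
  have hαsq : α ^ 2 = B := by rw [hα]; exact Real.sq_sqrt hB0
  have hβ0 : 0 ≤ β := by
    rw [hβ, hα, sub_nonneg]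
    exact Real.sqrt_le_sqrt (by linarith)
  have hβsq : β ^ 2 ≤ A - B := by
    have h1 : Real.sqrt B ^ 2 = B := Real.sq_sqrt hB0
    have h2 : Real.sqrt A ^ 2 = A := Real.sq_sqrt hA0
    have h3 : Real.sqrt (A - B) ^ 2 = A - B := Real.sq_sqrt hAB0
    have h4 : Real.sqrt B ≤ Real.sqrt A := Real.sqrt_le_sqrt (by linarith)
    have h5 : 0 ≤ Real.sqrt B := Real.sqrt_nonneg _
    have hββ : β = Real.sqrt A - Real.sqrt B := by rw [hβ, hα]
    rw [hββ]
    nlinarith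
  have hβle : β ^ 2 ≤ 1 - 1 / c ^ 2 := by
    have h7 : 1 + 2 * t * Real.cos (π / n) ≤ c ^ 2 - 1 := by
      nlinarith [mul_nonneg (sub_nonneg.mpr ht1.le) (by linarith : (0:ℝ) ≤ Real.cos (π / n))]
    have h8 : 1 - 1 / c ^ 2 = (c ^ 2 - 1) / c ^ 2 := by rw [sub_div, div_self hc2_pos.ne']
    have h9 : A - B ≤ 1 - 1 / c ^ 2 := by
      rw [hAB, h8]
      gcongr
    exact hβsq.trans h9
  -- pt components
  have hpt : ∀ a b d : ℝ, ∀ i : Fin 3, pt a b d i = ![a, b, d] i := fun a b d i => rfl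
  -- sin/cos pythagorean with normalization
  constructor
  · intro j hj1 hjn
    rw [hapex, hmid j hj1 hjn, hbase j hj1 hjn]
    rw [EuclideanSpace.dist_eq]
    have hsum : ∀ i : Fin 3,
        (β • pt 0 0 1) i - ((t • pt (Real.cos (2*π*j/n) / c) (Real.sin (2*π*j/n) / c) 0
          - α • pt 0 0 1)) i
        = ![-(t * (Real.cos (2*π*j/n) / c)), -(t * (Real.sin (2*π*j/n) / c)), β + α] i := by
      intro i
      fin_cases i <;>
        simp [pt, PiLp.smul_apply, PiLp.sub_apply, smul_eq_mul] <;> ring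
    have key : (∑ i : Fin 3, dist ((β • pt 0 0 1) i)
        ((t • pt (Real.cos (2*π*j/n) / c) (Real.sin (2*π*j/n) / c) 0 - α • pt 0 0 1) i) ^ 2) = 1 := by
      simp only [Real.dist_eq, sq_abs]
      have e : ∀ i : Fin 3, ((β • pt 0 0 1) i
          - (t • pt (Real.cos (2*π*j/n) / c) (Real.sin (2*π*j/n) / c) 0 - α • pt 0 0 1) i) ^ 2
          = (![-(t * (Real.cos (2*π*j/n) / c)), -(t * (Real.sin (2*π*j/n) / c)), β + α] i) ^ 2 := by
        intro i; rw [hsum i]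
      rw [Fin.sum_univ_three]
      rw [e 0, e 1, e 2]
      simp only [Matrix.cons_val_zero, Matrix.cons_val_one, Matrix.head_cons, Matrix.cons_val_two,
        Matrix.tail_cons]
      have hpyth : Real.cos (2*π*j/n) ^ 2 + Real.sin (2*π*j/n) ^ 2 = 1 :=
        Real.cos_sq_add_sin_sq _
      have hβα2 : (β + α) ^ 2 = A := by rw [hβα]; exact Real.sq_sqrt hA0
      have expand : (-(t * (Real.cos (2*π*j/n) / c))) ^ 2 + (-(t * (Real.sin (2*π*j/n) / c))) ^ 2
          = t ^ 2 / c ^ 2 := by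
        field_simp
        rw [hpyth]
      rw [hβα2, hA]
      nlinarith [expand]
    rw [key, Real.sqrt_one]
  · intro j hj1 hjn
    rw [hapex, hbase j hj1 hjn]
    rw [EuclideanSpace.dist_eq]
    have key : (∑ i : Fin 3, dist ((β • pt 0 0 1) i)
        ((pt (Real.cos (2*π*j/n) / c) (Real.sin (2*π*j/n) / c) 0) i) ^ 2) ≤ 1 := by
      simp only [Real.dist_eq, sq_abs]
      rw [Fin.sum_univ_three]
      have e0 : (β • pt 0 0 1) (0:Fin 3) - (pt (Real.cos (2*π*j/n) / c) (Real.sin (2*π*j/n) / c) 0) 0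
          = -(Real.cos (2*π*j/n) / c) := by
        simp [pt, PiLp.smul_apply, smul_eq_mul]
      have e1 : (β • pt 0 0 1) (1:Fin 3) - (pt (Real.cos (2*π*j/n) / c) (Real.sin (2*π*j/n) / c) 0) 1
          = -(Real.sin (2*π*j/n) / c) := by
        simp [pt, PiLp.smul_apply, smul_eq_mul]
      have e2 : (β • pt 0 0 1) (2:Fin 3) - (pt (Real.cos (2*π*j/n) / c) (Real.sin (2*π*j/n) / c) 0) 2
          = β := by
        simp [pt, PiLp.smul_apply, smul_eq_mul]
      rw [e0, e1, e2]
      have hpyth : Real.cos (2*π*j/n) ^ 2 + Real.sin (2*π*j/n) ^ 2 = 1 :=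
        Real.cos_sq_add_sin_sq _
      have expand : (-(Real.cos (2*π*j/n) / c)) ^ 2 + (-(Real.sin (2*π*j/n) / c)) ^ 2
          = 1 / c ^ 2 := by
        field_simp
        try nlinarith [hpyth]
        rw [hpyth]
      nlinarith [expand, hβle]
    calc Real.sqrt (∑ i : Fin 3, dist ((β • pt 0 0 1) i)
        ((pt (Real.cos (2*π*j/n) / c) (Real.sin (2*π*j/n) / c) 0) i) ^ 2)
        ≤ Real.sqrt 1 := Real.sqrt_le_sqrt key
      _ = 1 := Real.sqrt_one
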